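/- The algebra ℚ(λ₀,…,λ_n)[P]/((P−λ₀)⋯(P−λ_n) − Q) over the field ℚ(λ₀,…,λ_n)(Q) (with Q transcendental), i.e. the small equivariant quantum cohomology of ℂP^n, is semisimple: it is isomorphic to a product of field extensions; equivalently, the polynomial (P−λ₀)⋯(P−λ_n) − Q is separable over ℚ(λ₀,…,λ_n, Q). -/

import Mathlib

open Polynomial

noncomputable section QCAux

variable {R : Type*} [CommRing R]

/-- The endomorphism of `R[Y][X]` swapping the two variables. -/
def pswapHom (R : Type*) [CommRing R] : Polynomial (Polynomial R) →+* Polynomial (Polynomial R) :=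
  eval₂RingHom (eval₂RingHom (C.comp C) X) (C X)

@[simp] lemma pswapHom_CC (r : R) : pswapHom R (C (C r)) = C (C r) := by
  simp [pswapHom]

@[simp] lemma pswapHom_CX : pswapHom R (C X) = X := by
  simp [pswapHom]

@[simp] lemma pswapHom_X : pswapHom R (X : Polynomial (Polynomial R)) = C X := by
  simp [pswapHom]

lemma pswapHom_comp_pswapHom :
    (pswapHom R).comp (pswapHom R) = RingHom.id _ := by
  apply Polynomial.ringHom_ext'
  · apply Polynomial.ringHom_ext'
    · ext r
      simp
    · simp [RingHom.comp_apply]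
  · simp [RingHom.comp_apply]

/-- The swap of the two variables of `R[Y][X]` as a ring equivalence. -/
def pswap (R : Type*) [CommRing R] :
    Polynomial (Polynomial R) ≃+* Polynomial (Polynomial R) :=
  RingEquiv.ofRingHom (pswapHom R) (pswapHom R)
    pswapHom_comp_pswapHom pswapHom_comp_pswapHom

@[simp] lemma pswap_apply (p : Polynomial (Polynomial R)) : pswap R p = pswapHom R p := rfl

/-- Over the fraction field of `R[Y]`, the polynomial `∏ (X - λᵢ) - Y` is separable. -/
theorem QC_aux {R : Type*} [CommRing R] [IsDomain R] [UniqueFactorizationMonoid R]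
    [CharZero R] {F : Type*} [Field F] [Algebra (Polynomial R) F]
    [IsFractionRing (Polynomial R) F]
    {ι : Type*} [Fintype ι] (hcard : 0 < Fintype.card ι) (lam : ι → R) :
    ((∏ i : ι, (X - C (algebraMap (Polynomial R) F (Polynomial.C (lam i))))) -
      C (algebraMap (Polynomial R) F Polynomial.X)).Separable := by
  set A := Polynomial R with hA
  set p₀ : Polynomial A := (∏ i : ι, (X - C (C (lam i)))) - C X with hp₀
  set g : A := ∏ i : ι, (X - C (lam i)) with hg
  have hqprime : Prime (C g - X : Polynomial A) := by
    have := (prime_X_sub_C (R := A) g).neg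
    rwa [neg_sub] at this
  have hswap : pswap R (C g - X) = p₀ := by
    rw [hp₀, pswap_apply, map_sub]
    congr 1
    · rw [hg,
        show (pswapHom R) (C (∏ i : ι, (X - C (lam i))))
          = ((pswapHom R).comp C) (∏ i : ι, (X - C (lam i))) from rfl, map_prod]
      refine Finset.prod_congr rfl fun i _ => ?_
      simp [RingHom.comp_apply, map_sub]
    · exact pswapHom_X
  have hp₀prime : Prime p₀ := by
    rw [← hswap]
    exact (MulEquiv.prime_iff (pswap R).toMulEquiv).mpr hqprime
  have hprodmonic : (∏ i : ι, (X - C (C (lam i))) : Polynomial A).Monic :=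
    monic_prod_of_monic _ _ fun i _ => monic_X_sub_C _
  have hdeg : (∏ i : ι, (X - C (C (lam i))) : Polynomial A).degree = (Fintype.card ι : ℕ) := by
    rw [degree_prod]
    rw [Finset.sum_congr rfl fun i _ => degree_X_sub_C (C (lam i))]
    simp
  have hmonic : p₀.Monic := by
    rw [hp₀]
    refine hprodmonic.sub_of_left ?_
    rw [hdeg]
    exact lt_of_le_of_lt degree_C_le (by exact_mod_cast hcard)
  have hirr : Irreducible (p₀.map (algebraMap A F)) :=
    (hmonic.irreducible_iff_irreducible_map_fraction_map).mp hp₀prime.irreducible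
  haveI : CharZero F := charZero_of_injective_algebraMap (IsFractionRing.injective A F)
  have hsep : (p₀.map (algebraMap A F)).Separable := hirr.separable
  have hfin : p₀.map (algebraMap A F) =
      (∏ i : ι, (X - C (algebraMap A F (Polynomial.C (lam i))))) -
        C (algebraMap A F Polynomial.X) := by
    rw [hp₀, Polynomial.map_sub, Polynomial.map_C, Polynomial.map_prod]
    congr 1
    refine Finset.prod_congr rfl fun i _ => ?_
    rw [Polynomial.map_sub, Polynomial.map_X, Polynomial.map_C]
  rwa [hfin] at hsep

end QCAux


set_option maxHeartbeats 1000000 in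
set_option synthInstance.maxHeartbeats 400000 in
/-- The small equivariant quantum cohomology of `ℂPⁿ`,
`ℚ(λ₀,…,λ_n,Q)[P]/((P-λ₀)⋯(P-λ_n) - Q)` with `λ₀,…,λ_n, Q` independent
transcendentals, is semisimple: equivalently, the polynomial
`(P-λ₀)⋯(P-λ_n) - Q` is separable over `ℚ(λ₀,…,λ_n,Q)`. -/
theorem quantum_cohomology_CPn_separable (n : ℕ) :
    let F := FractionRing (MvPolynomial (Option (Fin (n + 1))) ℚ)
    let lam : Fin (n + 1) → F := fun i =>
      algebraMap (MvPolynomial (Option (Fin (n + 1))) ℚ) F (MvPolynomial.X (some i))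
    let Qv : F :=
      algebraMap (MvPolynomial (Option (Fin (n + 1))) ℚ) F (MvPolynomial.X none)
    ((∏ i : Fin (n + 1), (X - C (lam i))) - C Qv).Separable := by
  intro F lam Qv
  let ι := Fin (n + 1)
  let M := MvPolynomial (Option ι) ℚ
  let A := Polynomial (MvPolynomial ι ℚ)
  let e : M ≃+* A := (MvPolynomial.optionEquivLeft ℚ ι).toRingEquiv
  letI : Algebra A F := ((algebraMap M F).comp e.symm.toRingHom).toAlgebra
  haveI : IsFractionRing A F := (IsFractionRing.isFractionRing_iff_of_base_ringEquiv (S := F) e).mp inferInstance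
  have h1 : ∀ i : ι, algebraMap A F (Polynomial.C (MvPolynomial.X i)) = lam i := by
    intro i
    have h0 : e (MvPolynomial.X (some i)) = Polynomial.C (MvPolynomial.X i) :=
      MvPolynomial.optionEquivLeft_X_some ℚ ι i
    have he : e.symm (Polynomial.C (MvPolynomial.X i)) = MvPolynomial.X (some i) :=
      (e.toEquiv.symm_apply_eq).mpr h0.symm
    show ((algebraMap M F).comp e.symm.toRingHom) (Polynomial.C (MvPolynomial.X i)) = lam i
    rw [RingHom.comp_apply]
    rw [show e.symm.toRingHom (Polynomial.C (MvPolynomial.X i)) = MvPolynomial.X (some i) from he]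
  have h2 : algebraMap A F Polynomial.X = Qv := by
    have h0 : e (MvPolynomial.X none) = Polynomial.X :=
      MvPolynomial.optionEquivLeft_X_none ℚ ι
    have he : e.symm Polynomial.X = MvPolynomial.X none :=
      (e.toEquiv.symm_apply_eq).mpr h0.symm
    show ((algebraMap M F).comp e.symm.toRingHom) Polynomial.X = Qv
    rw [RingHom.comp_apply]
    rw [show e.symm.toRingHom (Polynomial.X) = MvPolynomial.X none from he]
  have key := QC_aux (R := MvPolynomial ι ℚ) (F := F)
    (ι := ι) (by simp [ι]) (fun i => MvPolynomial.X i)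
  simp only [A] at h1 h2
  simp only [h1, h2] at key
  exact key
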